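/- Let f : ℤⁿ → ℝ ∪ {+∞} satisfy discrete midpoint convexity f(x) + f(y) ≥ f(⌈(x+y)/2⌉) + f(⌊(x+y)/2⌋) for all x, y ∈ ℤⁿ. Then f satisfies translation-submodularity: f(x) + f(y) ≥ f((x − μ𝟙) ∨ y) + f(x ∧ (y + μ𝟙)) for all x, y ∈ ℤⁿ and all nonnegative integers μ, where ∨ and ∧ denote componentwise max and min and 𝟙 = (1,…,1). -/

import Mathlib

open scoped BigOperators

noncomputable section

/-- Integer neighborhood `N(x)` of a real point. -/
def intNbhd {n : ℕ} (x : Fin n → ℝ) : Set (Fin n → ℤ) :=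
  {z | ∀ i, |x i - (z i : ℝ)| < 1}

/-- Local convex extension of `f : ℤⁿ → ℝ ∪ {+∞}`. -/
noncomputable def localExt {n : ℕ} (f : (Fin n → ℤ) → EReal) (x : Fin n → ℝ) : EReal :=
  sInf { v : EReal | ∃ (m : ℕ) (lam : Fin m → ℝ) (y : Fin m → (Fin n → ℤ)),
      (∀ j, 0 ≤ lam j) ∧ (∑ j, lam j) = 1 ∧ (∀ j, y j ∈ intNbhd x) ∧
      (∀ i, (∑ j, lam j * ((y j i : ℝ))) = x i) ∧
      v = ∑ j, (((lam j : ℝ) : EReal) * f (y j)) }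

/-- A function is integrally convex if its local convex extension is convex. -/
def IsIntegrallyConvexFn {n : ℕ} (f : (Fin n → ℤ) → EReal) : Prop :=
  ∀ x y : Fin n → ℝ, ∀ t : ℝ, 0 ≤ t → t ≤ 1 →
    localExt f (fun i => t * x i + (1 - t) * y i) ≤
      ((t : ℝ) : EReal) * localExt f x + (((1 - t : ℝ)) : EReal) * localExt f y

/-- Coercion of an integer point to a real point. -/
def realify {n : ℕ} (z : Fin n → ℤ) : Fin n → ℝ := fun i => (z i : ℝ)

/-- A set `S ⊆ ℤⁿ` is integrally convex. -/
def IsIntegrallyConvexSet {n : ℕ} (S : Set (Fin n → ℤ)) : Prop :=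
  ∀ x : Fin n → ℝ, x ∈ convexHull ℝ (realify '' S) →
    x ∈ convexHull ℝ (realify '' (S ∩ intNbhd x))

lemma fdiv2_bounds (s : ℤ) : 2 * (s.fdiv 2) ≤ s ∧ s ≤ 2 * (s.fdiv 2) + 1 := by
  rw [Int.fdiv_eq_ediv_of_nonneg _ (by norm_num)]
  omega

lemma ereal_cancel {a b : EReal} {s : ℝ} (h : a + (s : EReal) ≤ b + (s : EReal)) : a ≤ b := by
  have h2 := add_le_add_left h ((-s : ℝ) : EReal)
  rw [add_assoc, add_assoc, ← EReal.coe_add, add_neg_cancel, EReal.coe_zero, add_zero, add_zero] at h2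
  exact h2

lemma submod_of_dmc {m : ℕ} (g : (Fin m → ℤ) → EReal) (hbot : ∀ z, g z ≠ ⊥)
    (hmid : ∀ x y : Fin m → ℤ,
      g (fun i => Int.fdiv (x i + y i + 1) 2) + g (fun i => Int.fdiv (x i + y i) 2) ≤
        g x + g y) :
    ∀ x y : Fin m → ℤ, g (x ⊔ y) + g (x ⊓ y) ≤ g x + g y := by
  suffices H : ∀ D : ℕ, ∀ x y : Fin m → ℤ, (∀ i, (x i - y i).natAbs ≤ D) →
      g (x ⊔ y) + g (x ⊓ y) ≤ g x + g y by
    intro x y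
    exact H (∑ i, (x i - y i).natAbs) x y
      (fun i => Finset.single_le_sum (f := fun j => (x j - y j).natAbs) (fun j _ => Nat.zero_le _) (Finset.mem_univ i))
  intro D
  induction D using Nat.strong_induction_on with
  | _ D IH =>
  intro x y hxy
  by_cases h1 : ∀ i, (x i - y i).natAbs ≤ 1
  · -- base case: midpoints are exactly sup and inf
    have hp : (fun i => Int.fdiv (x i + y i + 1) 2) = x ⊔ y := by
      funext i
      have h2 := fdiv2_bounds (x i + y i + 1)
      have h3 := h1 i
      simp only [Pi.sup_apply]
      omega
    have hq : (fun i => Int.fdiv (x i + y i) 2) = x ⊓ y := by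
      funext i
      have h2 := fdiv2_bounds (x i + y i)
      have h3 := h1 i
      simp only [Pi.inf_apply]
      omega
    have := hmid x y
    rwa [hp, hq] at this
  · push_neg at h1
    obtain ⟨i0, hi0⟩ := h1
    have hD2 : 2 ≤ D := le_trans hi0 (hxy i0)
    set p : Fin m → ℤ := fun i => Int.fdiv (x i + y i + 1) 2 with hpdef
    set q : Fin m → ℤ := fun i => Int.fdiv (x i + y i) 2 with hqdef
    have hpq : ∀ i, 2 * q i ≤ x i + y i ∧ x i + y i ≤ 2 * q i + 1 ∧ p i = x i + y i - q i := by
      intro i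
      have h2 := fdiv2_bounds (x i + y i)
      have h3 := fdiv2_bounds (x i + y i + 1)
      simp only [hpdef, hqdef]
      omega
    have hDlt : D - 1 < D := by omega
    -- IH instances
    have ih1 := IH (D - 1) hDlt x q (by
      intro i; have := hpq i; have := hxy i; omega)
    have ih2 := IH (D - 1) hDlt p y (by
      intro i; have := hpq i; have := hxy i; omega)
    have ih3 := IH (D - 1) hDlt (x ⊔ q) (p ⊔ y) (by
      intro i; have := hpq i; have := hxy i
      simp only [Pi.sup_apply]; omega)
    have ih4 := IH (D - 1) hDlt (x ⊓ q) (p ⊓ y) (by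
      intro i; have := hpq i; have := hxy i
      simp only [Pi.inf_apply]; omega)
    set r : Fin m → ℤ := (x ⊔ q) ⊓ (p ⊔ y) with hrdef
    set r' : Fin m → ℤ := (x ⊓ q) ⊔ (p ⊓ y) with hr'def
    have E1 : (x ⊔ q) ⊔ (p ⊔ y) = x ⊔ y := by
      funext i; have := hpq i
      simp only [Pi.sup_apply]; omega
    have E2 : (x ⊓ q) ⊓ (p ⊓ y) = x ⊓ y := by
      funext i; have := hpq i
      simp only [Pi.inf_apply]; omega
    have E3 : (fun i => Int.fdiv (r i + r' i + 1) 2) = p := by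
      funext i; have := hpq i
      have h2 := fdiv2_bounds (r i + r' i + 1)
      simp only [hrdef, hr'def, Pi.sup_apply, Pi.inf_apply] at h2 ⊢
      omega
    have E4 : (fun i => Int.fdiv (r i + r' i) 2) = q := by
      funext i; have := hpq i
      have h2 := fdiv2_bounds (r i + r' i)
      simp only [hrdef, hr'def, Pi.sup_apply, Pi.inf_apply] at h2 ⊢
      omega
    rw [E1] at ih3
    rw [E2] at ih4
    have hS := hmid x y
    rw [← hpdef, ← hqdef] at hS
    have hrr := hmid r r'
    rw [E3, E4] at hrr
    by_cases hStop : g p + g q = ⊤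
    · have : g x + g y = ⊤ := top_le_iff.mp (hStop ▸ hS)
      rw [this]; exact le_top
    · have hSbot : g p + g q ≠ ⊥ := by
        simp [EReal.add_eq_bot_iff, hbot]
      set S : EReal := g p + g q with hSdef
      obtain ⟨s, hs⟩ : ∃ s : ℝ, (s : EReal) = S := ⟨S.toReal, EReal.coe_toReal hStop hSbot⟩
      have key : g (x ⊔ y) + g (x ⊓ y) + S ≤ g x + g y + S := by
        calc g (x ⊔ y) + g (x ⊓ y) + S ≤ g (x ⊔ y) + g (x ⊓ y) + (g r + g r') := by
              exact add_le_add_right hrr _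
          _ = (g (x ⊔ y) + g r) + (g r' + g (x ⊓ y)) := by abel
          _ ≤ (g (x ⊔ q) + g (p ⊔ y)) + (g (x ⊓ q) + g (p ⊓ y)) := add_le_add ih3 ih4
          _ = (g (x ⊔ q) + g (x ⊓ q)) + (g (p ⊔ y) + g (p ⊓ y)) := by abel
          _ ≤ (g x + g q) + (g p + g y) := add_le_add ih1 ih2
          _ = g x + g y + S := by rw [hSdef]; abel
      rw [← hs] at key
      exact ereal_cancel key

/-- Discrete midpoint convexity implies translation-submodularity. -/
theorem discrete_midpoint_convexity_implies_translation_submodularity {n : ℕ}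
    (f : (Fin n → ℤ) → EReal) (hbot : ∀ x, f x ≠ ⊥)
    (hmid : ∀ x y : Fin n → ℤ,
      f (fun i => Int.fdiv (x i + y i + 1) 2) + f (fun i => Int.fdiv (x i + y i) 2) ≤
        f x + f y) :
    ∀ x y : Fin n → ℤ, ∀ μ : ℕ,
      f ((x - μ • (1 : Fin n → ℤ)) ⊔ y) + f (x ⊓ (y + μ • (1 : Fin n → ℤ))) ≤
        f x + f y := by
  intro x y μ
  set g : (Fin (n + 1) → ℤ) → EReal := fun z => f (fun i => z i.succ - z 0) with hgdef
  have hbot' : ∀ z, g z ≠ ⊥ := fun z => hbot _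
  have hmid' : ∀ z w : Fin (n + 1) → ℤ,
      g (fun j => Int.fdiv (z j + w j + 1) 2) + g (fun j => Int.fdiv (z j + w j) 2) ≤
        g z + g w := by
    intro z w
    simp only [hgdef]
    rcases Int.even_or_odd (z 0 + w 0) with ⟨t, ht⟩ | ⟨t, ht⟩
    · have e1 : (fun i : Fin n => Int.fdiv (z i.succ + w i.succ + 1) 2 -
          Int.fdiv (z 0 + w 0 + 1) 2) =
          fun i => Int.fdiv ((z i.succ - z 0) + (w i.succ - w 0) + 1) 2 := by
        funext i
        have h1 := fdiv2_bounds (z i.succ + w i.succ + 1)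
        have h2 := fdiv2_bounds (z 0 + w 0 + 1)
        have h3 := fdiv2_bounds ((z i.succ - z 0) + (w i.succ - w 0) + 1)
        omega
      have e2 : (fun i : Fin n => Int.fdiv (z i.succ + w i.succ) 2 -
          Int.fdiv (z 0 + w 0) 2) =
          fun i => Int.fdiv ((z i.succ - z 0) + (w i.succ - w 0)) 2 := by
        funext i
        have h1 := fdiv2_bounds (z i.succ + w i.succ)
        have h2 := fdiv2_bounds (z 0 + w 0)
        have h3 := fdiv2_bounds ((z i.succ - z 0) + (w i.succ - w 0))
        omega
      rw [e1, e2]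
      exact hmid (fun i => z i.succ - z 0) (fun i => w i.succ - w 0)
    · have e1 : (fun i : Fin n => Int.fdiv (z i.succ + w i.succ + 1) 2 -
          Int.fdiv (z 0 + w 0 + 1) 2) =
          fun i => Int.fdiv ((z i.succ - z 0) + (w i.succ - w 0)) 2 := by
        funext i
        have h1 := fdiv2_bounds (z i.succ + w i.succ + 1)
        have h2 := fdiv2_bounds (z 0 + w 0 + 1)
        have h3 := fdiv2_bounds ((z i.succ - z 0) + (w i.succ - w 0))
        omega
      have e2 : (fun i : Fin n => Int.fdiv (z i.succ + w i.succ) 2 -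
          Int.fdiv (z 0 + w 0) 2) =
          fun i => Int.fdiv ((z i.succ - z 0) + (w i.succ - w 0) + 1) 2 := by
        funext i
        have h1 := fdiv2_bounds (z i.succ + w i.succ)
        have h2 := fdiv2_bounds (z 0 + w 0)
        have h3 := fdiv2_bounds ((z i.succ - z 0) + (w i.succ - w 0) + 1)
        omega
      rw [e1, e2, add_comm]
      exact hmid (fun i => z i.succ - z 0) (fun i => w i.succ - w 0)
  have main := submod_of_dmc g hbot' hmid'
    (Fin.cons 0 x) (Fin.cons (μ : ℤ) (fun i => y i + μ))
  have smul1 : ∀ i, (μ • (1 : Fin n → ℤ)) i = (μ : ℤ) := by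
    intro i; simp
  have e1 : g (Fin.cons 0 x ⊔ Fin.cons (μ : ℤ) (fun i => y i + μ)) =
      f ((x - μ • (1 : Fin n → ℤ)) ⊔ y) := by
    simp only [hgdef]
    congr 1
    funext i
    simp only [Pi.sup_apply, Fin.cons_succ, Fin.cons_zero, Pi.sub_apply, smul1 i]
    omega
  have e2 : g (Fin.cons 0 x ⊓ Fin.cons (μ : ℤ) (fun i => y i + μ)) =
      f (x ⊓ (y + μ • (1 : Fin n → ℤ))) := by
    simp only [hgdef]
    congr 1
    funext i
    simp only [Pi.inf_apply, Fin.cons_succ, Fin.cons_zero, Pi.add_apply, smul1 i]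
    omega
  have e3 : g (Fin.cons 0 x) = f x := by
    simp only [hgdef]
    congr 1
    funext i
    simp [Fin.cons_succ, Fin.cons_zero]
  have e4 : g (Fin.cons (μ : ℤ) (fun i => y i + μ)) = f y := by
    simp only [hgdef]
    congr 1
    funext i
    simp [Fin.cons_succ, Fin.cons_zero]
  rwa [e1, e2, e3, e4] at main
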